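/- Let G = (V, E) be a finite acyclic digraph and let (V1, E1), (V2, E2) be a separation of G along a pair {u, v} of distinct vertices. Assume that u dominates v in G. Define H2* = (V2, E2 ∪ {(u, v)}) if v has at least one incoming edge in E1, and H2* = (V2, E2) otherwise. Then for all vertices x, y ∈ V2, x dominates y in H2* if and only if x dominates y in G. -/

import Mathlib

/-- `x` dominates `y` in the digraph with edge set `E`: there is a directed
path with at least one edge from `x` to `y`. -/
def Dominates {α : Type*} (E : Finset (α × α)) (x y : α) : Prop :=
  Relation.TransGen (fun a b => (a, b) ∈ E) x y

/-- A separation of the finite digraph `(V, E)` along the pair `{u, v}` of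
distinct vertices into `H1 = (V1, E1)` and `H2 = (V2, E2)`. -/
structure Separation {α : Type*} [DecidableEq α] (V : Finset α) (E : Finset (α × α))
    (u v : α) (V1 V2 : Finset α) (E1 E2 : Finset (α × α)) : Prop where
  ne : u ≠ v
  vUnion : V1 ∪ V2 = V
  vInter : V1 ∩ V2 = {u, v}
  eDisjoint : Disjoint E1 E2
  eUnion : E1 ∪ E2 = E
  mem1 : ∀ e ∈ E1, e.1 ∈ V1 ∧ e.2 ∈ V1
  mem2 : ∀ e ∈ E2, e.1 ∈ V2 ∧ e.2 ∈ V2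

private lemma dom_mono {α : Type*} {E E' : Finset (α × α)} (h : E ⊆ E') {x y : α} :
    Dominates E x y → Dominates E' x y :=
  fun hxy => by
    unfold Dominates at *
    induction hxy with
    | single hab => exact Relation.TransGen.single (h hab)
    | tail _ hab ih => exact ih.tail (h hab)

/-- If `G` is acyclic and `u` dominates `v` in `G`, then dominance on `V2` is
the same in `H2*` as in `G`, where `H2* = (V2, E2 ∪ {(u, v)})` if `v` has an
incoming edge in `E1` and `H2* = (V2, E2)` otherwise. -/
theorem stmt7 {α : Type*} [DecidableEq α] (V V1 V2 : Finset α)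
    (E E1 E2 : Finset (α × α)) (u v : α)
    (hsep : Separation V E u v V1 V2 E1 E2)
    (hacyc : ∀ x : α, ¬ Dominates E x x)
    (hdom : Dominates E u v) :
    ((∃ e ∈ E1, e.2 = v) →
      ∀ x ∈ V2, ∀ y ∈ V2, (Dominates (insert (u, v) E2) x y ↔ Dominates E x y)) ∧
    (¬ (∃ e ∈ E1, e.2 = v) →
      ∀ x ∈ V2, ∀ y ∈ V2, (Dominates E2 x y ↔ Dominates E x y)) := by
  obtain ⟨hne, hVu, hVi, hEd, hEu, hm1, hm2⟩ := hsep
  have hE1 : E1 ⊆ E := hEu ▸ Finset.subset_union_left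
  have hE2 : E2 ⊆ E := hEu ▸ Finset.subset_union_right
  have hu2 : u ∈ V2 := by
    have : u ∈ V1 ∩ V2 := by rw [hVi]; simp
    exact (Finset.mem_inter.mp this).2
  have hv2 : v ∈ V2 := by
    have : v ∈ V1 ∩ V2 := by rw [hVi]; simp
    exact (Finset.mem_inter.mp this).2
  have hvu : ¬ Dominates E v u := fun h => hacyc u (hdom.trans h)
  have hmemuv : ∀ a, a ∈ V1 → a ∈ V2 → a = u ∨ a = v := by
    intro a h1 h2
    have : a ∈ V1 ∩ V2 := Finset.mem_inter.mpr ⟨h1, h2⟩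
    rw [hVi] at this
    simpa using this
  have key : ∀ (E2' : Finset (α × α)), E2 ⊆ E2' →
      ((∃ e ∈ E1, e.2 = v) → (u, v) ∈ E2') →
      (∀ e ∈ E2', e ∈ E2 ∨ e = (u, v)) →
      ∀ x ∈ V2, ∀ y ∈ V2, (Dominates E2' x y ↔ Dominates E x y) := by
    intro E2' hsub hmk hsup x hx y hy
    constructor
    · intro h
      have step : ∀ a b : α, (a, b) ∈ E2' → Dominates E a b := by
        intro a b hab
        rcases hsup _ hab with h' | h'
        · exact Relation.TransGen.single (hE2 h')
        · injection h' with h1 h2; subst h1; subst h2; exact hdom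
      clear hx hy
      induction h with
      | single h' => exact step _ _ h'
      | tail _ h' ih => exact ih.trans (step _ _ h')
    · -- backward direction
      -- start of a Dominates E2' path is in V2
      have startV2 : ∀ a b : α, Dominates E2' a b → a ∈ V2 := by
        intro a b h
        obtain ⟨c, hc, -⟩ := Relation.TransGen.head'_iff.mp h
        rcases hsup _ hc with h' | h'
        · exact (hm2 _ h').1
        · injection h' with h1 _; subst h1; exact hu2
      -- a TransGen E1 path ending at v yields the marker edge
      have marker : ∀ a : α,
          Relation.TransGen (fun p q : α => (p, q) ∈ E1) a v → (u, v) ∈ E2' := by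
        intro a h
        obtain ⟨w, -, hw⟩ := Relation.TransGen.tail'_iff.mp h
        exact hmk ⟨(w, v), hw, rfl⟩
      set Q : α → Prop := fun a =>
        Dominates E2' a y ∨
        (Relation.ReflTransGen (fun p q : α => (p, q) ∈ E1) a v ∧
          (v = y ∨ Dominates E2' v y)) ∨
        (Relation.ReflTransGen (fun p q : α => (p, q) ∈ E1) a u ∧
          (u = y ∨ Dominates E2' u y)) with hQ
      have extract : ∀ a, a ∈ V2 →
          Relation.TransGen (fun p q : α => (p, q) ∈ E) a y → Q a → Dominates E2' a y := by
        intro a ha hay hq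
        have hane : a ≠ y := fun h => hacyc y (h ▸ hay)
        rcases hq with h1 | ⟨hr, hd⟩ | ⟨hr, hd⟩
        · exact h1
        · rcases Relation.reflTransGen_iff_eq_or_transGen.mp hr with rfl | ht
          · rcases hd with rfl | hd
            · exact absurd rfl hane
            · exact hd
          · have haV1 : a ∈ V1 := by
              obtain ⟨c, hc, -⟩ := Relation.TransGen.head'_iff.mp ht
              exact (hm1 _ hc).1
            rcases hmemuv a haV1 ha with rfl | rfl
            · have huv : Dominates E2' a v := Relation.TransGen.single (marker a ht)
              rcases hd with rfl | hd
              · exact huv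
              · exact huv.trans hd
            · exact absurd (dom_mono hE1 ht) (hacyc a)
        · rcases Relation.reflTransGen_iff_eq_or_transGen.mp hr with rfl | ht
          · rcases hd with rfl | hd
            · exact absurd rfl hane
            · exact hd
          · have haV1 : a ∈ V1 := by
              obtain ⟨c, hc, -⟩ := Relation.TransGen.head'_iff.mp ht
              exact (hm1 _ hc).1
            rcases hmemuv a haV1 ha with rfl | rfl
            · exact absurd (dom_mono hE1 ht) (hacyc a)
            · exact absurd (dom_mono hE1 ht) hvu
      intro h
      have main : Q x := by
        clear hx
        induction h using Relation.TransGen.head_induction_on with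
        | single h' =>
          rename_i a
          rw [← hEu] at h'
          rcases Finset.mem_union.mp h' with h'' | h''
          · have hyV1 : y ∈ V1 := (hm1 _ h'').2
            rcases hmemuv y hyV1 hy with rfl | rfl
            · exact Or.inr (Or.inr ⟨Relation.ReflTransGen.single h'', Or.inl rfl⟩)
            · exact Or.inr (Or.inl ⟨Relation.ReflTransGen.single h'', Or.inl rfl⟩)
          · exact Or.inl (Relation.TransGen.single (hsub h''))
        | head h' hrest ih =>
          rename_i a c
          rw [← hEu] at h'
          rcases Finset.mem_union.mp h' with h'' | h''
          · rcases ih with h1 | ⟨hr, hd⟩ | ⟨hr, hd⟩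
            · have hcV2 : c ∈ V2 := startV2 _ _ h1
              have hcV1 : c ∈ V1 := (hm1 _ h'').2
              rcases hmemuv c hcV1 hcV2 with rfl | rfl
              · exact Or.inr (Or.inr ⟨Relation.ReflTransGen.single h'', Or.inr h1⟩)
              · exact Or.inr (Or.inl ⟨Relation.ReflTransGen.single h'', Or.inr h1⟩)
            · exact Or.inr (Or.inl ⟨hr.head h'', hd⟩)
            · exact Or.inr (Or.inr ⟨hr.head h'', hd⟩)
          · have hcV2 : c ∈ V2 := (hm2 _ h'').2
            have hcy : Dominates E2' c y := extract c hcV2 hrest ih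
            exact Or.inl (hcy.head (hsub h''))
      exact extract x hx h main
  constructor
  · intro hmk
    exact key (insert (u, v) E2) (Finset.subset_insert _ _)
      (fun _ => Finset.mem_insert_self _ _)
      (fun e he => (Finset.mem_insert.mp he).symm)
  · intro hnm
    exact key E2 (le_refl _) (fun h => absurd h hnm) (fun e he => Or.inl he)
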